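/- For every integer r ≥ 2 and every positive integer n divisible by 3r−1, there exists a K_{r+1}-free simple graph G on n vertices with minimum degree δ(G) = ((3r−4)/(3r−1))·n that is not r-colourable. (Such a graph is obtained from a partition V = A_1 ∪ … ∪ A_5 ∪ B_1 ∪ … ∪ B_{r−2} with |A_i| = n/(3r−1) and |B_j| = 3n/(3r−1), with all edges between A_i and A_{i+1} (indices modulo 5), all edges between each A_i and each B_j, and all edges between distinct B_j and B_{j'}.) Consequently, the constant (3r−4)/(3r−1) in the Andrásfai–Erdős–Sós theorem cannot be lowered. -/

import Mathlib

open scoped Classical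


/-- Blow-up base graph: `C₅` joined with `K_q`. -/
def HG (q : ℕ) : SimpleGraph (Fin 5 ⊕ Fin q) where
  Adj x y :=
    match x, y with
    | .inl a, .inl b => b = a + 1 ∨ a = b + 1
    | .inl _, .inr _ => True
    | .inr _, .inl _ => True
    | .inr c, .inr d => c ≠ d
  symm := by
    refine ⟨?_⟩; rintro (a | c) (b | d) h
    · exact h.symm
    · trivial
    · trivial
    · exact Ne.symm h
  loopless := by
    have h5 : ∀ a : Fin 5, ¬(a = a + 1 ∨ a = a + 1) := by decide
    refine ⟨?_⟩; rintro (a | c) h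
    · exact h5 a h
    · exact h rfl

lemma hg_cliqueFree (q : ℕ) : (HG q).CliqueFree (q + 3) := by
  intro t ht
  obtain ⟨htc, htcard⟩ := ht
  have hsplit : t.toLeft.card + t.toRight.card = t.card :=
    Finset.card_toLeft_add_card_toRight
  have h2 : t.toRight.card ≤ q := by
    simpa using Finset.card_le_card (Finset.subset_univ t.toRight)
  have h3 : 3 ≤ t.toLeft.card := by omega
  obtain ⟨s, hs, hcard3⟩ := Finset.exists_subset_card_eq h3
  rw [Finset.card_eq_three] at hcard3
  obtain ⟨a, b, c, hab, hac, hbc, rfl⟩ := hcard3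
  have ha : (Sum.inl a : Fin 5 ⊕ Fin q) ∈ t := Finset.mem_toLeft.mp (hs (by simp))
  have hb : (Sum.inl b : Fin 5 ⊕ Fin q) ∈ t := Finset.mem_toLeft.mp (hs (by simp))
  have hc : (Sum.inl c : Fin 5 ⊕ Fin q) ∈ t := Finset.mem_toLeft.mp (hs (by simp))
  have e1 : (HG q).Adj (.inl a) (.inl b) := htc ha hb (by simp [hab])
  have e2 : (HG q).Adj (.inl a) (.inl c) := htc ha hc (by simp [hac])
  have e3 : (HG q).Adj (.inl b) (.inl c) := htc hb hc (by simp [hbc])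
  have key : ∀ a b c : Fin 5, (b = a + 1 ∨ a = b + 1) → (c = a + 1 ∨ a = c + 1) →
      (c = b + 1 ∨ b = c + 1) → False := by decide
  exact key a b c e1 e2 e3

lemma hg_not_colorable (q : ℕ) : ¬ (HG q).Colorable (q + 2) := by
  rintro ⟨D⟩
  set T : Finset (Fin (q + 2)) :=
    Finset.image (fun c : Fin q => D (.inr c)) Finset.univ with hT
  have hinj : Function.Injective (fun c : Fin q => D (.inr c)) := by
    intro c d hcd
    by_contra hne
    exact D.valid (show (HG q).Adj (.inr c) (.inr d) from hne) hcd
  have hTcard : T.card = q := by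
    rw [hT, Finset.card_image_of_injective _ hinj, Finset.card_univ, Fintype.card_fin]
  have hScard : Tᶜ.card = 2 := by
    rw [Finset.card_compl, hTcard]
    simp
  have hmem : ∀ a : Fin 5, D (.inl a) ∈ Tᶜ := by
    intro a
    rw [Finset.mem_compl, hT]
    simp only [Finset.mem_image, Finset.mem_univ, true_and]
    rintro ⟨c, hc⟩
    exact D.valid (show (HG q).Adj (.inl a) (.inr c) from trivial) hc.symm
  have key : ∀ u v w : Fin (q + 2), u ∈ Tᶜ → v ∈ Tᶜ → w ∈ Tᶜ → u ≠ v → v ≠ w → u = w := by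
    intro u v w hu hv hw huv hvw
    by_contra huw
    have hsub : ({u, v, w} : Finset (Fin (q + 2))) ⊆ Tᶜ := by
      intro x hx
      simp only [Finset.mem_insert, Finset.mem_singleton] at hx
      rcases hx with rfl | rfl | rfl <;> assumption
    have h3 : ({u, v, w} : Finset (Fin (q + 2))).card = 3 :=
      Finset.card_eq_three.mpr ⟨u, v, w, huv, huw, hvw, rfl⟩
    have := Finset.card_le_card hsub
    omega
  have hadj : ∀ a : Fin 5, D (.inl a) ≠ D (.inl (a + 1)) :=
    fun a => D.valid (show (HG q).Adj (.inl a) (.inl (a + 1)) from Or.inl rfl)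
  have h01 := hadj 0
  have h12 := hadj 1
  have h23 := hadj 2
  have h34 := hadj 3
  have h40 : D (.inl 4) ≠ D (.inl 0) := by
    have := hadj 4
    simpa using this
  have e02 : D (.inl 0) = D (.inl 2) := by
    have := key _ _ _ (hmem 0) (hmem 1) (hmem 2) h01 (by simpa using h12)
    simpa using this
  have e24 : D (.inl 2) = D (.inl 4) := by
    have := key _ _ _ (hmem 2) (hmem 3) (hmem 4) (by simpa using h23) (by simpa using h34)
    simpa using this
  exact h40 ((e02.trans e24).symm)

lemma c5_two : ∀ a : Fin 5, Fintype.card {b : Fin 5 // b = a + 1 ∨ a = b + 1} = 2 := by decide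

lemma card_adj (q m : ℕ) (w0 : Fin 5 ⊕ Fin q) :
    Nat.card {u : (Fin 5 × Fin m) ⊕ (Fin q × Fin (3 * m)) //
      (HG q).Adj w0 (Sum.map Prod.fst Prod.fst u)} = (3 * q + 2) * m := by
  have E : {u : (Fin 5 × Fin m) ⊕ (Fin q × Fin (3 * m)) //
        (HG q).Adj w0 (Sum.map Prod.fst Prod.fst u)} ≃
      ({b : Fin 5 // (HG q).Adj w0 (.inl b)} × Fin m) ⊕
      ({c : Fin q // (HG q).Adj w0 (.inr c)} × Fin (3 * m)) :=
    Equiv.subtypeSum.trans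
      (Equiv.sumCongr
        ((Equiv.subtypeEquivRight
          (q := fun x : Fin 5 × Fin m => (HG q).Adj w0 (.inl x.1))
          (fun x => Iff.rfl)).trans
          (Equiv.prodSubtypeFstEquivSubtypeProd (p := fun b : Fin 5 => (HG q).Adj w0 (.inl b))))
        ((Equiv.subtypeEquivRight
          (q := fun x : Fin q × Fin (3 * m) => (HG q).Adj w0 (.inr x.1))
          (fun x => Iff.rfl)).trans
          (Equiv.prodSubtypeFstEquivSubtypeProd (p := fun c : Fin q => (HG q).Adj w0 (.inr c)))))
  rw [Nat.card_congr E, Nat.card_sum, Nat.card_prod, Nat.card_prod,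
    Nat.card_eq_fintype_card (α := Fin m), Nat.card_eq_fintype_card (α := Fin (3 * m)),
    Fintype.card_fin, Fintype.card_fin]
  cases w0 with
  | inl a =>
      have h1 : Nat.card {b : Fin 5 // (HG q).Adj (.inl a) (.inl b)} = 2 := by
        rw [Nat.card_congr (Equiv.subtypeEquivRight
          (p := fun b : Fin 5 => (HG q).Adj (.inl a) (.inl b))
          (q := fun b => b = a + 1 ∨ a = b + 1) (fun b => Iff.rfl)), Nat.card_eq_fintype_card]
        exact c5_two a
      have h2 : Nat.card {c : Fin q // (HG q).Adj (.inl a) (.inr c)} = q := by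
        rw [Nat.card_congr (Equiv.subtypeUnivEquiv
          (p := fun c : Fin q => (HG q).Adj (.inl a) (.inr c)) (fun c => trivial)),
          Nat.card_eq_fintype_card, Fintype.card_fin]
      rw [h1, h2]; ring
  | inr c =>
      obtain ⟨q', rfl⟩ : ∃ q', q = q' + 1 := ⟨q - 1, by have := c.pos; omega⟩
      have h1 : Nat.card {b : Fin 5 // (HG (q' + 1)).Adj (.inr c) (.inl b)} = 5 := by
        rw [Nat.card_congr (Equiv.subtypeUnivEquiv
          (p := fun b : Fin 5 => (HG (q' + 1)).Adj (.inr c) (.inl b)) (fun b => trivial)),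
          Nat.card_eq_fintype_card, Fintype.card_fin]
      have h2 : Nat.card {d : Fin (q' + 1) // (HG (q' + 1)).Adj (.inr c) (.inr d)} = q' := by
        rw [Nat.card_congr (Equiv.subtypeEquivRight
          (p := fun d : Fin (q' + 1) => (HG (q' + 1)).Adj (.inr c) (.inr d))
          (q := fun d => ¬ d = c)
          (fun d => ne_comm)), Nat.card_eq_fintype_card, Fintype.card_subtype_compl,
          Fintype.card_subtype_eq, Fintype.card_fin]
        omega
      rw [h1, h2]; ring


/-- Optimality of the Andrásfai–Erdős–Sós theorem: for every `r ≥ 2` and `n > 0`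
divisible by `3r - 1` there is a `K_{r+1}`-free simple graph on `n` vertices with minimum
degree exactly `((3r-4)/(3r-1))·n` that is not `r`-colourable. -/
theorem aes_optimal (r n : ℕ) (hr : 2 ≤ r) (hn : 0 < n) (hdvd : 3 * r - 1 ∣ n) :
    ∃ G : SimpleGraph (Fin n),
      G.CliqueFree (r + 1) ∧
      (∀ v : Fin n, (3 * (r : ℝ) - 4) / (3 * (r : ℝ) - 1) * (n : ℝ) ≤ G.degree v) ∧
      (∃ v : Fin n, (G.degree v : ℝ) = (3 * (r : ℝ) - 4) / (3 * (r : ℝ) - 1) * (n : ℝ)) ∧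
      ¬ G.Colorable r := by
  obtain ⟨q, rfl⟩ : ∃ q, r = q + 2 := ⟨r - 2, by omega⟩
  rw [show 3 * (q + 2) - 1 = 3 * q + 5 by omega] at hdvd
  obtain ⟨m, hm⟩ := hdvd
  have hm0 : 0 < m := by
    rcases Nat.eq_zero_or_pos m with h | h
    · subst h; rw [Nat.mul_zero] at hm; omega
    · exact h
  have hcard : Fintype.card (Fin n) =
      Fintype.card ((Fin 5 × Fin m) ⊕ (Fin q × Fin (3 * m))) := by
    simp only [Fintype.card_fin, Fintype.card_sum, Fintype.card_prod]
    rw [hm]; ring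
  let e : Fin n ≃ (Fin 5 × Fin m) ⊕ (Fin q × Fin (3 * m)) := Fintype.equivOfCardEq hcard
  let f : Fin n → Fin 5 ⊕ Fin q := fun v => Sum.map Prod.fst Prod.fst (e v)
  refine ⟨(HG q).comap f, ?_, ?_, ?_, ?_⟩
  · -- clique free
    intro t ht
    have hinj : Set.InjOn f t := by
      intro u hu v hv hfe
      by_contra hne
      exact ((HG q).ne_of_adj (ht.1 hu hv hne)) hfe
    refine hg_cliqueFree q (t.image f) ⟨?_, ?_⟩
    · intro x hx y hy hxy
      simp only [Finset.coe_image, Set.mem_image, Finset.mem_coe] at hx hy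
      obtain ⟨u, hu, rfl⟩ := hx
      obtain ⟨v, hv, rfl⟩ := hy
      exact ht.1 hu hv (fun h => hxy (by rw [h]))
    · rw [Finset.card_image_of_injOn hinj, ht.2]
  all_goals {
    have hdeg : ∀ v : Fin n, ((HG q).comap f).degree v = (3 * q + 2) * m := by
      intro v
      have h1 : ((HG q).comap f).degree v =
          Nat.card {u : Fin n // (HG q).Adj (f v) (f u)} := by
        rw [← SimpleGraph.card_neighborSet_eq_degree, Nat.card_eq_fintype_card]
        exact Fintype.card_congr (Equiv.subtypeEquivRight (fun u => Iff.rfl))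
      rw [h1, Nat.card_congr (Equiv.subtypeEquiv e
        (p := fun u : Fin n => (HG q).Adj (f v) (f u))
        (q := fun u' => (HG q).Adj (f v) (Sum.map Prod.fst Prod.fst u'))
        (fun u => Iff.rfl))]
      exact card_adj q m (f v)
    have hreal : (((3 * q + 2) * m : ℕ) : ℝ) =
        (3 * ((q + 2 : ℕ) : ℝ) - 4) / (3 * ((q + 2 : ℕ) : ℝ) - 1) * (n : ℝ) := by
      have h5 : (3 * ((q + 2 : ℕ) : ℝ) - 1) = 3 * (q : ℝ) + 5 := by push_cast; ring
      have h4 : (3 * ((q + 2 : ℕ) : ℝ) - 4) = 3 * (q : ℝ) + 2 := by push_cast; ring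
      rw [hm, h5, h4, div_mul_eq_mul_div, eq_div_iff (by positivity)]
      push_cast
      ring
    refine ?_
    first
    | exact fun v => le_of_eq (by rw [← hreal]; exact (congrArg Nat.cast (hdeg v)).symm)
    | exact ⟨⟨0, hn⟩, by rw [← hreal]; exact congrArg Nat.cast (hdeg ⟨0, hn⟩)⟩
    | { rintro ⟨C⟩
        have hfs : Function.Surjective f := by
          rintro (a | c)
          · exact ⟨e.symm (Sum.inl (a, ⟨0, hm0⟩)), by simp [f]⟩
          · exact ⟨e.symm (Sum.inr (c, ⟨0, by omega⟩)), by simp [f]⟩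
        refine hg_not_colorable q ⟨SimpleGraph.Coloring.mk
          (fun w => C (Function.surjInv hfs w)) ?_⟩
        intro w w' hadj hC
        refine C.valid ?_ hC
        show (HG q).Adj (f (Function.surjInv hfs w)) (f (Function.surjInv hfs w'))
        rw [Function.surjInv_eq hfs, Function.surjInv_eq hfs]
        exact hadj }
  }
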